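/- Let D and E be points in the group of points of C, and write (u1,u2) = l(D), (v1,v2) = l(E). Define B11 = −d·u1²v2² − d·u2²v1² + d·u2²v2² + u1²v1², B12 = B21 = (1−d)·u1u2v1v2, B22 = −d·u2²v2² − u1²v1² + u1²v2² + u2²v1². Then there exists λ ∈ K with λ ≠ 0 such that for all i, j ∈ {1,2}: B_{ij} = λ·(l_i(D+E)·l_j(D−E) + l_j(D+E)·l_i(D−E)). -/

import Mathlib

open WeierstrassCurve

/-- The elliptic curve `C : y² = x(x² + 2(1+d)x + (1−d)²)` in Weierstrass form. -/
def edwardsWeierstrass {K : Type*} [Field K] (d : K) : WeierstrassCurve.Affine K :=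
  { a₁ := 0, a₂ := 2 * (1 + d), a₃ := 0, a₄ := (1 - d) ^ 2, a₆ := 0 }

/-- The Kummer-line coordinates `l(P) = (l₁(P), l₂(P))`: `l(O) = (1,1)` and
`l((x,y)) = (x + 1 - d, x - 1 + d)`. -/
def kummerLine {K : Type*} [Field K] (d : K) : (edwardsWeierstrass d).Point → K × K
  | Affine.Point.zero => (1, 1)
  | Affine.Point.some x _ _ => (x + 1 - d, x - 1 + d)

lemma kummer_neg {K : Type*} [Field K] (d : K) (E : (edwardsWeierstrass d).Point) :
    kummerLine d (-E) = kummerLine d E := by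
  rcases E with _ | @⟨x, y, h⟩ <;> rfl

lemma ew_negY {K : Type*} [Field K] (d : K) (x y : K) :
    (edwardsWeierstrass d).negY x y = -y := by
  simp [Affine.negY, edwardsWeierstrass]

lemma ew_eq {K : Type*} [Field K] {d x y : K}
    (h : (edwardsWeierstrass d).Equation x y) :
    y ^ 2 = x ^ 3 + 2 * (1 + d) * x ^ 2 + (1 - d) ^ 2 * x := by
  have := (Affine.equation_iff x y).mp h
  simp only [edwardsWeierstrass] at this
  linear_combination this

open Classical in
set_option maxHeartbeats 3200000 in
theorem stmt_12 {K : Type*} [Field K] (hchar : (2 : K) ≠ 0) (d : K)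
    (hd0 : d ≠ 0) (hd1 : d ≠ 1)
    (D E : (edwardsWeierstrass d).Point) :
    let u1 := (kummerLine d D).1
    let u2 := (kummerLine d D).2
    let v1 := (kummerLine d E).1
    let v2 := (kummerLine d E).2
    let p1 := (kummerLine d (D + E)).1
    let p2 := (kummerLine d (D + E)).2
    let m1 := (kummerLine d (D - E)).1
    let m2 := (kummerLine d (D - E)).2
    ∃ lam : K, lam ≠ 0 ∧
      -(d * u1 ^ 2 * v2 ^ 2) - d * u2 ^ 2 * v1 ^ 2 + d * u2 ^ 2 * v2 ^ 2 + u1 ^ 2 * v1 ^ 2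
          = lam * (p1 * m1 + p1 * m1) ∧
      (1 - d) * u1 * u2 * v1 * v2 = lam * (p1 * m2 + p2 * m1) ∧
      (1 - d) * u1 * u2 * v1 * v2 = lam * (p2 * m1 + p1 * m2) ∧
      -(d * u2 ^ 2 * v2 ^ 2) - u1 ^ 2 * v1 ^ 2 + u1 ^ 2 * v2 ^ 2 + u2 ^ 2 * v1 ^ 2
          = lam * (p2 * m2 + p2 * m2) := by
  have h1d : (1 : K) - d ≠ 0 := sub_ne_zero.mpr (Ne.symm hd1)
  rcases D with _ | @⟨x1, y1, h1⟩
  · -- D = 0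
    rw [← Affine.Point.zero_def, zero_add, zero_sub, kummer_neg]
    simp only [kummerLine]
    refine ⟨(1 - d) / 2, div_ne_zero h1d hchar, ?_, ?_, ?_, ?_⟩ <;>
      · field_simp
        ring
  rcases E with _ | @⟨x2, y2, h2⟩
  · -- E = 0
    rw [← Affine.Point.zero_def, add_zero, sub_zero]
    simp only [kummerLine]
    refine ⟨(1 - d) / 2, div_ne_zero h1d hchar, ?_, ?_, ?_, ?_⟩ <;>
      · field_simp
        ring
  have hy1 : y1 ^ 2 = x1 ^ 3 + 2 * (1 + d) * x1 ^ 2 + (1 - d) ^ 2 * x1 := ew_eq h1.1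
  have hy2 : y2 ^ 2 = x2 ^ 3 + 2 * (1 + d) * x2 ^ 2 + (1 - d) ^ 2 * x2 := ew_eq h2.1
  by_cases hx : x1 = x2
  · subst hx
    by_cases hy : y1 = (edwardsWeierstrass d).negY x1 y2
    · -- D + E = 0
      rw [Affine.Point.add_of_Y_eq rfl hy]
      have hy' : y1 = -y2 := by rw [hy, ew_negY]
      by_cases hyy : y1 = y2
      · -- two-torsion : y1 = y2 = 0
        have hy20 : y2 = 0 := by
          have : (2:K) * y2 = 0 := by linear_combination hyy.symm.trans hy'
          exact (mul_eq_zero.mp this).resolve_left hchar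
        have hy10 : y1 = 0 := hyy.trans hy20
        rw [sub_eq_add_neg, Affine.Point.neg_some,
            Affine.Point.add_of_Y_eq rfl (by rw [Affine.negY_negY]; exact hyy)]
        simp only [kummerLine]
        have hf0 : x1 ^ 3 + 2 * (1 + d) * x1 ^ 2 + (1 - d) ^ 2 * x1 = 0 := by
          rw [hy10] at hy1; linear_combination -hy1
        have ha : x1 + 1 - d ≠ 0 := by
          intro h
          have key : (d - 1) ^ 2 * (4 * d) = 0 := by
            linear_combination hf0 + (4 * d + (-4 : K) * d ^ 2 + (-1 : K) * x1 + (-3 : K) * x1 * d + (-1 : K) * x1 ^ 2) * h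
          rcases mul_eq_zero.mp key with h' | h'
          · exact sub_ne_zero.mpr hd1 (pow_eq_zero_iff (two_ne_zero) |>.mp h')
          · exact hd0 ((mul_eq_zero.mp h').resolve_left (by
              intro h4
              exact hchar (mul_self_eq_zero.mp (by linear_combination h4))))
        have hb : x1 - 1 + d ≠ 0 := by
          intro h
          have key : (1 - d) ^ 2 * 4 = 0 := by
            linear_combination hf0 + ((-4 : K) + 4 * d + (-3 : K) * x1 + (-1 : K) * x1 * d + (-1 : K) * x1 ^ 2) * h
          have := (mul_eq_zero.mp key).resolve_right (by
            intro h4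
            exact hchar (mul_self_eq_zero.mp (by linear_combination h4)))
          exact h1d (pow_eq_zero_iff (two_ne_zero) |>.mp this)
        refine ⟨(1 - d) * ((x1 + 1 - d) * (x1 - 1 + d)) ^ 2 / 2,
          div_ne_zero (mul_ne_zero h1d (pow_ne_zero 2 (mul_ne_zero ha hb))) hchar,
          ?_, ?_, ?_, ?_⟩
        · rw [div_mul_eq_mul_div, eq_div_iff hchar]
          linear_combination (8 + (-16 : K) * d + 8 * d ^ 2) * hf0
        · rw [div_mul_eq_mul_div, eq_div_iff hchar]
          linear_combination (0:K) * hf0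
        · rw [div_mul_eq_mul_div, eq_div_iff hchar]
          linear_combination (0:K) * hf0
        · rw [div_mul_eq_mul_div, eq_div_iff hchar]
          linear_combination ((-8 : K) + 16 * d + (-8 : K) * d ^ 2) * hf0
      · -- y1 = -y2, y1 ≠ y2 : D - E is a doubling
        have hy1ne : y1 ≠ 0 := fun h0 => hyy (by rw [h0] at hy' ⊢; linear_combination -hy')
        rw [sub_eq_add_neg, Affine.Point.neg_some,
            Affine.Point.add_of_Y_ne (x₁ := x1) (y₁ := y1) (by rw [Affine.negY_negY]; exact hyy)]
        simp only [kummerLine, Affine.addX]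
        rw [Affine.slope_of_Y_ne rfl (show y1 ≠ (edwardsWeierstrass d).negY x1
            ((edwardsWeierstrass d).negY x1 y2) by rw [Affine.negY_negY]; exact hyy)]
        rw [show (edwardsWeierstrass d).a₁ = 0 from rfl,
            show (edwardsWeierstrass d).a₂ = 2 * (1 + d) from rfl,
            show (edwardsWeierstrass d).a₄ = (1 - d) ^ 2 from rfl, ew_negY]
        set s := (3 * x1 ^ 2 + 2 * (2 * (1 + d)) * x1 + (1 - d) ^ 2 - 0 * y1) / (y1 - -y1) with hsd
        have h2y : y1 - -y1 ≠ 0 := by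
          intro h
          have h' : (2 : K) * y1 = 0 := by linear_combination h
          exact hy1ne ((mul_eq_zero.mp h').resolve_left hchar)
        have hs : s * (2 * y1) = 3 * x1 ^ 2 + 4 * (1 + d) * x1 + (1 - d) ^ 2 := by
          rw [hsd, div_mul_eq_mul_div, div_eq_iff h2y]; ring
        refine ⟨2 * (1 - d) * y1 ^ 2,
          mul_ne_zero (mul_ne_zero hchar h1d) (pow_ne_zero 2 hy1ne), ?_, ?_, ?_, ?_⟩
        · refine mul_left_cancel₀ (pow_ne_zero 2 (mul_ne_zero hchar hy1ne)) ?_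
          linear_combination ((-4 : K) * y1 ^ 2 + 12 * y1 ^ 2 * d + (-12 : K) * y1 ^ 2 * d ^ 2 + 4 * y1 ^ 2 * d ^ 3 + (-8 : K) * y1 ^ 3 * s + 8 * y1 ^ 3 * d * s + (-16 : K) * x1 * y1 ^ 2 + 16 * x1 * y1 ^ 2 * d ^ 2 + (-12 : K) * x1 ^ 2 * y1 ^ 2 + 12 * x1 ^ 2 * y1 ^ 2 * d) * hs + (16 * y1 ^ 2 + 32 * y1 ^ 2 * d + (-48 : K) * y1 ^ 2 * d ^ 2 + 32 * x1 * y1 ^ 2 + (-32 : K) * x1 * y1 ^ 2 * d) * hy1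
        · refine mul_left_cancel₀ (pow_ne_zero 2 (mul_ne_zero hchar hy1ne)) ?_
          linear_combination ((-4 : K) * y1 ^ 2 + 12 * y1 ^ 2 * d + (-12 : K) * y1 ^ 2 * d ^ 2 + 4 * y1 ^ 2 * d ^ 3 + (-8 : K) * y1 ^ 3 * s + 8 * y1 ^ 3 * d * s + (-16 : K) * x1 * y1 ^ 2 + 16 * x1 * y1 ^ 2 * d ^ 2 + (-12 : K) * x1 ^ 2 * y1 ^ 2 + 12 * x1 ^ 2 * y1 ^ 2 * d) * hs + (32 * y1 ^ 2 + (-32 : K) * y1 ^ 2 * d ^ 2 + 32 * x1 * y1 ^ 2 + (-32 : K) * x1 * y1 ^ 2 * d) * hy1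
        · refine mul_left_cancel₀ (pow_ne_zero 2 (mul_ne_zero hchar hy1ne)) ?_
          linear_combination ((-4 : K) * y1 ^ 2 + 12 * y1 ^ 2 * d + (-12 : K) * y1 ^ 2 * d ^ 2 + 4 * y1 ^ 2 * d ^ 3 + (-8 : K) * y1 ^ 3 * s + 8 * y1 ^ 3 * d * s + (-16 : K) * x1 * y1 ^ 2 + 16 * x1 * y1 ^ 2 * d ^ 2 + (-12 : K) * x1 ^ 2 * y1 ^ 2 + 12 * x1 ^ 2 * y1 ^ 2 * d) * hs + (32 * y1 ^ 2 + (-32 : K) * y1 ^ 2 * d ^ 2 + 32 * x1 * y1 ^ 2 + (-32 : K) * x1 * y1 ^ 2 * d) * hy1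
        · refine mul_left_cancel₀ (pow_ne_zero 2 (mul_ne_zero hchar hy1ne)) ?_
          linear_combination ((-4 : K) * y1 ^ 2 + 12 * y1 ^ 2 * d + (-12 : K) * y1 ^ 2 * d ^ 2 + 4 * y1 ^ 2 * d ^ 3 + (-8 : K) * y1 ^ 3 * s + 8 * y1 ^ 3 * d * s + (-16 : K) * x1 * y1 ^ 2 + 16 * x1 * y1 ^ 2 * d ^ 2 + (-12 : K) * x1 ^ 2 * y1 ^ 2 + 12 * x1 ^ 2 * y1 ^ 2 * d) * hs + (48 * y1 ^ 2 + (-32 : K) * y1 ^ 2 * d + (-16 : K) * y1 ^ 2 * d ^ 2 + 32 * x1 * y1 ^ 2 + (-32 : K) * x1 * y1 ^ 2 * d) * hy1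
    · -- y1 ≠ -y2 : so y1 = y2, D + E is a doubling, D - E = 0
      have heq : y1 = y2 := by
        have h0 : (y1 - y2) * (y1 + y2) = 0 := by linear_combination hy1 - hy2
        rcases mul_eq_zero.mp h0 with h | h
        · linear_combination h
        · exact absurd (by rw [ew_negY]; linear_combination h) hy
      subst heq
      have hy1ne : y1 ≠ 0 := fun h0 => hy (by rw [ew_negY, h0]; ring)
      rw [Affine.Point.add_of_Y_ne (x₁ := x1) (y₁ := y1) hy, sub_eq_add_neg,
          Affine.Point.neg_some, Affine.Point.add_of_Y_eq rfl (Affine.negY_negY (W' := edwardsWeierstrass d) x1 y1).symm]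
      simp only [kummerLine, Affine.addX]
      rw [Affine.slope_of_Y_ne rfl hy]
      rw [show (edwardsWeierstrass d).a₁ = 0 from rfl,
          show (edwardsWeierstrass d).a₂ = 2 * (1 + d) from rfl,
          show (edwardsWeierstrass d).a₄ = (1 - d) ^ 2 from rfl, ew_negY]
      set s := (3 * x1 ^ 2 + 2 * (2 * (1 + d)) * x1 + (1 - d) ^ 2 - 0 * y1) / (y1 - -y1) with hsd
      have h2y : y1 - -y1 ≠ 0 := by
        intro h
        have h' : (2 : K) * y1 = 0 := by linear_combination h
        exact hy1ne ((mul_eq_zero.mp h').resolve_left hchar)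
      have hs : s * (2 * y1) = 3 * x1 ^ 2 + 4 * (1 + d) * x1 + (1 - d) ^ 2 := by
        rw [hsd, div_mul_eq_mul_div, div_eq_iff h2y]; ring
      refine ⟨2 * (1 - d) * y1 ^ 2,
        mul_ne_zero (mul_ne_zero hchar h1d) (pow_ne_zero 2 hy1ne), ?_, ?_, ?_, ?_⟩
      · refine mul_left_cancel₀ (pow_ne_zero 2 (mul_ne_zero hchar hy1ne)) ?_
        linear_combination ((-4 : K) * y1 ^ 2 + 12 * y1 ^ 2 * d + (-12 : K) * y1 ^ 2 * d ^ 2 + 4 * y1 ^ 2 * d ^ 3 + (-8 : K) * y1 ^ 3 * s + 8 * y1 ^ 3 * d * s + (-16 : K) * x1 * y1 ^ 2 + 16 * x1 * y1 ^ 2 * d ^ 2 + (-12 : K) * x1 ^ 2 * y1 ^ 2 + 12 * x1 ^ 2 * y1 ^ 2 * d) * hs + (16 * y1 ^ 2 + 32 * y1 ^ 2 * d + (-48 : K) * y1 ^ 2 * d ^ 2 + 32 * x1 * y1 ^ 2 + (-32 : K) * x1 * y1 ^ 2 * d) * hy1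
      · refine mul_left_cancel₀ (pow_ne_zero 2 (mul_ne_zero hchar hy1ne)) ?_
        linear_combination ((-4 : K) * y1 ^ 2 + 12 * y1 ^ 2 * d + (-12 : K) * y1 ^ 2 * d ^ 2 + 4 * y1 ^ 2 * d ^ 3 + (-8 : K) * y1 ^ 3 * s + 8 * y1 ^ 3 * d * s + (-16 : K) * x1 * y1 ^ 2 + 16 * x1 * y1 ^ 2 * d ^ 2 + (-12 : K) * x1 ^ 2 * y1 ^ 2 + 12 * x1 ^ 2 * y1 ^ 2 * d) * hs + (32 * y1 ^ 2 + (-32 : K) * y1 ^ 2 * d ^ 2 + 32 * x1 * y1 ^ 2 + (-32 : K) * x1 * y1 ^ 2 * d) * hy1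
      · refine mul_left_cancel₀ (pow_ne_zero 2 (mul_ne_zero hchar hy1ne)) ?_
        linear_combination ((-4 : K) * y1 ^ 2 + 12 * y1 ^ 2 * d + (-12 : K) * y1 ^ 2 * d ^ 2 + 4 * y1 ^ 2 * d ^ 3 + (-8 : K) * y1 ^ 3 * s + 8 * y1 ^ 3 * d * s + (-16 : K) * x1 * y1 ^ 2 + 16 * x1 * y1 ^ 2 * d ^ 2 + (-12 : K) * x1 ^ 2 * y1 ^ 2 + 12 * x1 ^ 2 * y1 ^ 2 * d) * hs + (32 * y1 ^ 2 + (-32 : K) * y1 ^ 2 * d ^ 2 + 32 * x1 * y1 ^ 2 + (-32 : K) * x1 * y1 ^ 2 * d) * hy1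
      · refine mul_left_cancel₀ (pow_ne_zero 2 (mul_ne_zero hchar hy1ne)) ?_
        linear_combination ((-4 : K) * y1 ^ 2 + 12 * y1 ^ 2 * d + (-12 : K) * y1 ^ 2 * d ^ 2 + 4 * y1 ^ 2 * d ^ 3 + (-8 : K) * y1 ^ 3 * s + 8 * y1 ^ 3 * d * s + (-16 : K) * x1 * y1 ^ 2 + 16 * x1 * y1 ^ 2 * d ^ 2 + (-12 : K) * x1 ^ 2 * y1 ^ 2 + 12 * x1 ^ 2 * y1 ^ 2 * d) * hs + (48 * y1 ^ 2 + (-32 : K) * y1 ^ 2 * d + (-16 : K) * y1 ^ 2 * d ^ 2 + 32 * x1 * y1 ^ 2 + (-32 : K) * x1 * y1 ^ 2 * d) * hy1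
  · -- generic case x1 ≠ x2
    have hx' : x1 - x2 ≠ 0 := sub_ne_zero.mpr hx
    rw [sub_eq_add_neg, Affine.Point.neg_some,
        Affine.Point.add_of_X_ne hx, Affine.Point.add_of_X_ne hx]
    simp only [kummerLine, Affine.addX, Affine.slope_of_X_ne hx, ew_negY]
    simp only [edwardsWeierstrass]
    set s := (y1 - y2) / (x1 - x2) with hsdef
    set t := (y1 - -y2) / (x1 - x2) with htdef
    have hs : s * (x1 - x2) = y1 - y2 := div_mul_cancel₀ _ hx'
    have ht : t * (x1 - x2) = y1 + y2 := by
      rw [htdef, div_mul_cancel₀ _ hx']; ring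
    refine ⟨(1 - d) * (x1 - x2) ^ 2 / 2,
      div_ne_zero (mul_ne_zero h1d (pow_ne_zero 2 hx')) hchar, ?_, ?_, ?_, ?_⟩
    · rw [div_mul_eq_mul_div, eq_div_iff hchar]
      refine mul_left_cancel₀ (pow_ne_zero 2 hx') ?_
      linear_combination ((-2 : K) * x2 ^ 2 * y2 + 2 * x2 ^ 2 * y2 * t ^ 2 + (-4 : K) * x2 ^ 2 * y2 * d + (-2 : K) * x2 ^ 2 * y2 * d * t ^ 2 + 6 * x2 ^ 2 * y2 * d ^ 2 + (-2 : K) * x2 ^ 3 * s + 2 * x2 ^ 3 * s * t ^ 2 + (-4 : K) * x2 ^ 3 * d * s + (-2 : K) * x2 ^ 3 * d * s * t ^ 2 + 6 * x2 ^ 3 * d ^ 2 * s + (-2 : K) * x2 ^ 3 * y2 + 2 * x2 ^ 3 * y2 * d + (-2 : K) * x2 ^ 4 * s + 2 * x2 ^ 4 * d * s + 2 * y1 * x2 ^ 2 + (-2 : K) * y1 * x2 ^ 2 * t ^ 2 + 4 * y1 * x2 ^ 2 * d + 2 * y1 * x2 ^ 2 * d * t ^ 2 + (-6 : K) * y1 *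 x2 ^ 2 * d ^ 2 + 2 * y1 * x2 ^ 3 + (-2 : K) * y1 * x2 ^ 3 * d + 4 * x1 * x2 * y2 + (-4 : K) * x1 * x2 * y2 * t ^ 2 + 8 * x1 * x2 * y2 * d + 4 * x1 * x2 * y2 * d * t ^ 2 + (-12 : K) * x1 * x2 * y2 * d ^ 2 + 6 * x1 * x2 ^ 2 * s + (-6 : K) * x1 * x2 ^ 2 * s * t ^ 2 + 12 * x1 * x2 ^ 2 * d * s + 6 * x1 * x2 ^ 2 * d * s * t ^ 2 + (-18 : K) * x1 * x2 ^ 2 * d ^ 2 * s + 2 * x1 * x2 ^ 2 * y2 + (-2 : K) * x1 * x2 ^ 2 * y2 * d + 4 * x1 * x2 ^ 3 * s + (-4 : K) * x1 * x2 ^ 3 * d * s + (-4 : K) * x1 * y1 * x2 + 4 * x1 * y1 * x2 * t ^ 2 + (-8 : K) * x1 * y1 * x2 * d + (-4 : K) * x1 * y1 * x2 * d * t ^ 2 + 12 * x1 * y1 * x2 * d ^ 2 + (-2 : K) * x1 * y1 * x2 ^ 2 + 2 * x1 * y1 * x2 ^ 2 * d + (-2 : K) * x1 ^ 2 * y2 +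 2 * x1 ^ 2 * y2 * t ^ 2 + (-4 : K) * x1 ^ 2 * y2 * d + (-2 : K) * x1 ^ 2 * y2 * d * t ^ 2 + 6 * x1 ^ 2 * y2 * d ^ 2 + (-6 : K) * x1 ^ 2 * x2 * s + 6 * x1 ^ 2 * x2 * s * t ^ 2 + (-12 : K) * x1 ^ 2 * x2 * d * s + (-6 : K) * x1 ^ 2 * x2 * d * s * t ^ 2 + 18 * x1 ^ 2 * x2 * d ^ 2 * s + 2 * x1 ^ 2 * x2 * y2 + (-2 : K) * x1 ^ 2 * x2 * y2 * d + 2 * x1 ^ 2 * y1 + (-2 : K) * x1 ^ 2 * y1 * t ^ 2 + 4 * x1 ^ 2 * y1 * d + 2 * x1 ^ 2 * y1 * d * t ^ 2 + (-6 : K) * x1 ^ 2 * y1 * d ^ 2 + (-2 : K) * x1 ^ 2 * y1 * x2 + 2 * x1 ^ 2 * y1 * x2 * d + 2 * x1 ^ 3 * s + (-2 : K) * x1 ^ 3 * s * t ^ 2 + 4 * x1 ^ 3 * d * s + 2 * x1 ^ 3 * d * s * t ^ 2 + (-6 : K) * x1 ^ 3 * d ^ 2 * s + (-2 : K) * x1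 ^ 3 * y2 + 2 * x1 ^ 3 * y2 * d + (-4 : K) * x1 ^ 3 * x2 * s + 4 * x1 ^ 3 * x2 * d * s + 2 * x1 ^ 3 * y1 + (-2 : K) * x1 ^ 3 * y1 * d + 2 * x1 ^ 4 * s + (-2 : K) * x1 ^ 4 * d * s) * hs + ((-2 : K) * y2 ^ 3 + 2 * y2 ^ 3 * d + 2 * x2 * y2 ^ 2 * t + (-2 : K) * x2 * y2 ^ 2 * d * t + 2 * x2 ^ 2 * y2 + 4 * x2 ^ 2 * y2 * d + (-6 : K) * x2 ^ 2 * y2 * d ^ 2 + (-2 : K) * x2 ^ 3 * t + (-4 : K) * x2 ^ 3 * d * t + 6 * x2 ^ 3 * d ^ 2 * t + 2 * x2 ^ 3 * y2 + (-2 : K) * x2 ^ 3 * y2 * d + (-2 : K) * x2 ^ 4 * t + 2 * x2 ^ 4 * d * t + 2 * y1 * y2 ^ 2 + (-2 : K) * y1 * y2 ^ 2 * d + (-4 : K) * y1 * x2 * y2 * t + 4 * y1 * x2 * y2 * d * t + 2 * y1 * x2 ^ 2 + 4 * y1 * x2 ^ 2 * d + (-6 : K) * y1 * x2 ^ 2 *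 d ^ 2 + 2 * y1 * x2 ^ 3 + (-2 : K) * y1 * x2 ^ 3 * d + 2 * y1 ^ 2 * y2 + (-2 : K) * y1 ^ 2 * y2 * d + 2 * y1 ^ 2 * x2 * t + (-2 : K) * y1 ^ 2 * x2 * d * t + (-2 : K) * y1 ^ 3 + 2 * y1 ^ 3 * d + (-2 : K) * x1 * y2 ^ 2 * t + 2 * x1 * y2 ^ 2 * d * t + (-4 : K) * x1 * x2 * y2 + (-8 : K) * x1 * x2 * y2 * d + 12 * x1 * x2 * y2 * d ^ 2 + 6 * x1 * x2 ^ 2 * t + 12 * x1 * x2 ^ 2 * d * t + (-18 : K) * x1 * x2 ^ 2 * d ^ 2 * t + (-2 : K) * x1 * x2 ^ 2 * y2 + 2 * x1 * x2 ^ 2 * y2 * d + 4 * x1 * x2 ^ 3 * t + (-4 : K) * x1 * x2 ^ 3 * d * t + 4 * x1 * y1 * y2 * t + (-4 : K) * x1 * y1 * y2 * d * t + (-4 : K) * x1 * y1 * x2 + (-8 : K) * x1 * y1 * x2 * d + 12 * x1 * y1 * x2 * d ^ 2 + (-2 : K) * x1 * y1 * x2 ^ 2 + 2 * x1 * y1 *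 x2 ^ 2 * d + (-2 : K) * x1 * y1 ^ 2 * t + 2 * x1 * y1 ^ 2 * d * t + 2 * x1 ^ 2 * y2 + 4 * x1 ^ 2 * y2 * d + (-6 : K) * x1 ^ 2 * y2 * d ^ 2 + (-6 : K) * x1 ^ 2 * x2 * t + (-12 : K) * x1 ^ 2 * x2 * d * t + 18 * x1 ^ 2 * x2 * d ^ 2 * t + (-2 : K) * x1 ^ 2 * x2 * y2 + 2 * x1 ^ 2 * x2 * y2 * d + 2 * x1 ^ 2 * y1 + 4 * x1 ^ 2 * y1 * d + (-6 : K) * x1 ^ 2 * y1 * d ^ 2 + (-2 : K) * x1 ^ 2 * y1 * x2 + 2 * x1 ^ 2 * y1 * x2 * d + 2 * x1 ^ 3 * t + 4 * x1 ^ 3 * d * t + (-6 : K) * x1 ^ 3 * d ^ 2 * t + 2 * x1 ^ 3 * y2 + (-2 : K) * x1 ^ 3 * y2 * d + (-4 : K) * x1 ^ 3 * x2 * t + 4 * x1 ^ 3 * x2 * d * t + 2 * x1 ^ 3 * y1 + (-2 : K) * x1 ^ 3 * y1 * d + 2 * x1 ^ 4 * t + (-2 : K) * x1 ^ 4 * d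 * t) * ht + (4 * y2 ^ 2 + (-4 : K) * y2 ^ 2 * d + 4 * x2 ^ 2 + 8 * x2 ^ 2 * d + (-12 : K) * x2 ^ 2 * d ^ 2 + 4 * x2 ^ 3 + (-4 : K) * x2 ^ 3 * d + (-2 : K) * y1 ^ 2 + 2 * y1 ^ 2 * d + (-2 : K) * x1 + 6 * x1 * d + (-6 : K) * x1 * d ^ 2 + 2 * x1 * d ^ 3 + (-8 : K) * x1 * x2 + (-16 : K) * x1 * x2 * d + 24 * x1 * x2 * d ^ 2 + (-4 : K) * x1 * x2 ^ 2 + 4 * x1 * x2 ^ 2 * d + 8 * x1 ^ 2 * d + (-8 : K) * x1 ^ 2 * d ^ 2 + (-4 : K) * x1 ^ 2 * x2 + 4 * x1 ^ 2 * x2 * d + 2 * x1 ^ 3 + (-2 : K) * x1 ^ 3 * d) * hy1 + ((-2 : K) * y2 ^ 2 + 2 * y2 ^ 2 * d + (-2 : K) * x2 + 6 * x2 * d + (-6 : K) * x2 * d ^ 2 + 2 * x2 * d ^ 3 + 8 * x2 ^ 2 * d + (-8 : K) * x2 ^ 2 * d ^ 2 + 2 * x2 ^ 3 + (-2 : K)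 * x2 ^ 3 * d + 4 * x1 + (-12 : K) * x1 * d + 12 * x1 * d ^ 2 + (-4 : K) * x1 * d ^ 3 + (-8 : K) * x1 * x2 + (-16 : K) * x1 * x2 * d + 24 * x1 * x2 * d ^ 2 + (-4 : K) * x1 * x2 ^ 2 + 4 * x1 * x2 ^ 2 * d + 12 * x1 ^ 2 + 8 * x1 ^ 2 * d + (-20 : K) * x1 ^ 2 * d ^ 2 + (-4 : K) * x1 ^ 2 * x2 + 4 * x1 ^ 2 * x2 * d + 8 * x1 ^ 3 + (-8 : K) * x1 ^ 3 * d) * hy2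
    · rw [div_mul_eq_mul_div, eq_div_iff hchar]
      refine mul_left_cancel₀ (pow_ne_zero 2 hx') ?_
      linear_combination ((-4 : K) * x2 ^ 2 * y2 + 2 * x2 ^ 2 * y2 * t ^ 2 + (-2 : K) * x2 ^ 2 * y2 * d * t ^ 2 + 4 * x2 ^ 2 * y2 * d ^ 2 + (-4 : K) * x2 ^ 3 * s + 2 * x2 ^ 3 * s * t ^ 2 + (-2 : K) * x2 ^ 3 * d * s * t ^ 2 + 4 * x2 ^ 3 * d ^ 2 * s + (-2 : K) * x2 ^ 3 * y2 + 2 * x2 ^ 3 * y2 * d + (-2 : K) * x2 ^ 4 * s + 2 * x2 ^ 4 * d * s + 4 * y1 * x2 ^ 2 + (-2 : K) * y1 * x2 ^ 2 * t ^ 2 + 2 * y1 * x2 ^ 2 * d * t ^ 2 + (-4 : K) * y1 * x2 ^ 2 * d ^ 2 + 2 * y1 * x2 ^ 3 + (-2 : K) * y1 * x2 ^ 3 * d + 8 * x1 * x2 * y2 + (-4 : K) * x1 * x2 * y2 * t ^ 2 + 4 * x1 * x2 * y2 * d * t ^ 2 + (-8 : K) * x1 * x2 * y2 * d ^ 2 +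 12 * x1 * x2 ^ 2 * s + (-6 : K) * x1 * x2 ^ 2 * s * t ^ 2 + 6 * x1 * x2 ^ 2 * d * s * t ^ 2 + (-12 : K) * x1 * x2 ^ 2 * d ^ 2 * s + 2 * x1 * x2 ^ 2 * y2 + (-2 : K) * x1 * x2 ^ 2 * y2 * d + 4 * x1 * x2 ^ 3 * s + (-4 : K) * x1 * x2 ^ 3 * d * s + (-8 : K) * x1 * y1 * x2 + 4 * x1 * y1 * x2 * t ^ 2 + (-4 : K) * x1 * y1 * x2 * d * t ^ 2 + 8 * x1 * y1 * x2 * d ^ 2 + (-2 : K) * x1 * y1 * x2 ^ 2 + 2 * x1 * y1 * x2 ^ 2 * d + (-4 : K) * x1 ^ 2 * y2 + 2 * x1 ^ 2 * y2 * t ^ 2 + (-2 : K) * x1 ^ 2 * y2 * d * t ^ 2 + 4 * x1 ^ 2 * y2 * d ^ 2 + (-12 : K) * x1 ^ 2 * x2 * s + 6 * x1 ^ 2 * x2 * s * t ^ 2 + (-6 : K) * x1 ^ 2 * x2 * d * s * t ^ 2 + 12 * x1 ^ 2 * x2 * d ^ 2 * s + 2 * x1 ^ 2 * x2 * y2 +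 (-2 : K) * x1 ^ 2 * x2 * y2 * d + 4 * x1 ^ 2 * y1 + (-2 : K) * x1 ^ 2 * y1 * t ^ 2 + 2 * x1 ^ 2 * y1 * d * t ^ 2 + (-4 : K) * x1 ^ 2 * y1 * d ^ 2 + (-2 : K) * x1 ^ 2 * y1 * x2 + 2 * x1 ^ 2 * y1 * x2 * d + 4 * x1 ^ 3 * s + (-2 : K) * x1 ^ 3 * s * t ^ 2 + 2 * x1 ^ 3 * d * s * t ^ 2 + (-4 : K) * x1 ^ 3 * d ^ 2 * s + (-2 : K) * x1 ^ 3 * y2 + 2 * x1 ^ 3 * y2 * d + (-4 : K) * x1 ^ 3 * x2 * s + 4 * x1 ^ 3 * x2 * d * s + 2 * x1 ^ 3 * y1 + (-2 : K) * x1 ^ 3 * y1 * d + 2 * x1 ^ 4 * s + (-2 : K) * x1 ^ 4 * d * s) * hs + ((-2 : K) * y2 ^ 3 + 2 * y2 ^ 3 * d + 2 * x2 * y2 ^ 2 * t + (-2 : K) * x2 * y2 ^ 2 * d * t + 4 * x2 ^ 2 * y2 + (-4 : K) * x2 ^ 2 * y2 * d ^ 2 + (-4 : K) * x2 ^ 3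 * t + 4 * x2 ^ 3 * d ^ 2 * t + 2 * x2 ^ 3 * y2 + (-2 : K) * x2 ^ 3 * y2 * d + (-2 : K) * x2 ^ 4 * t + 2 * x2 ^ 4 * d * t + 2 * y1 * y2 ^ 2 + (-2 : K) * y1 * y2 ^ 2 * d + (-4 : K) * y1 * x2 * y2 * t + 4 * y1 * x2 * y2 * d * t + 4 * y1 * x2 ^ 2 + (-4 : K) * y1 * x2 ^ 2 * d ^ 2 + 2 * y1 * x2 ^ 3 + (-2 : K) * y1 * x2 ^ 3 * d + 2 * y1 ^ 2 * y2 + (-2 : K) * y1 ^ 2 * y2 * d + 2 * y1 ^ 2 * x2 * t + (-2 : K) * y1 ^ 2 * x2 * d * t + (-2 : K) * y1 ^ 3 + 2 * y1 ^ 3 * d + (-2 : K) * x1 * y2 ^ 2 * t + 2 * x1 * y2 ^ 2 * d * t + (-8 : K) * x1 * x2 * y2 + 8 * x1 * x2 * y2 * d ^ 2 + 12 * x1 * x2 ^ 2 * t + (-12 : K) * x1 * x2 ^ 2 * d ^ 2 * t + (-2 : K) * x1 * x2 ^ 2 * y2 + 2 * x1 * x2 ^ 2 * y2 * d + 4 *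 x1 * x2 ^ 3 * t + (-4 : K) * x1 * x2 ^ 3 * d * t + 4 * x1 * y1 * y2 * t + (-4 : K) * x1 * y1 * y2 * d * t + (-8 : K) * x1 * y1 * x2 + 8 * x1 * y1 * x2 * d ^ 2 + (-2 : K) * x1 * y1 * x2 ^ 2 + 2 * x1 * y1 * x2 ^ 2 * d + (-2 : K) * x1 * y1 ^ 2 * t + 2 * x1 * y1 ^ 2 * d * t + 4 * x1 ^ 2 * y2 + (-4 : K) * x1 ^ 2 * y2 * d ^ 2 + (-12 : K) * x1 ^ 2 * x2 * t + 12 * x1 ^ 2 * x2 * d ^ 2 * t + (-2 : K) * x1 ^ 2 * x2 * y2 + 2 * x1 ^ 2 * x2 * y2 * d + 4 * x1 ^ 2 * y1 + (-4 : K) * x1 ^ 2 * y1 * d ^ 2 + (-2 : K) * x1 ^ 2 * y1 * x2 + 2 * x1 ^ 2 * y1 * x2 * d + 4 * x1 ^ 3 * t + (-4 : K) * x1 ^ 3 * d ^ 2 * t + 2 * x1 ^ 3 * y2 + (-2 : K) * x1 ^ 3 * y2 * d + (-4 : K) * x1 ^ 3 * x2 * t + 4 * x1 ^ 3 * x2 *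 d * t + 2 * x1 ^ 3 * y1 + (-2 : K) * x1 ^ 3 * y1 * d + 2 * x1 ^ 4 * t + (-2 : K) * x1 ^ 4 * d * t) * ht + (4 * y2 ^ 2 + (-4 : K) * y2 ^ 2 * d + 8 * x2 ^ 2 + (-8 : K) * x2 ^ 2 * d ^ 2 + 4 * x2 ^ 3 + (-4 : K) * x2 ^ 3 * d + (-2 : K) * y1 ^ 2 + 2 * y1 ^ 2 * d + (-2 : K) * x1 + 6 * x1 * d + (-6 : K) * x1 * d ^ 2 + 2 * x1 * d ^ 3 + (-16 : K) * x1 * x2 + 16 * x1 * x2 * d ^ 2 + (-4 : K) * x1 * x2 ^ 2 + 4 * x1 * x2 ^ 2 * d + 4 * x1 ^ 2 + (-4 : K) * x1 ^ 2 * d ^ 2 + (-4 : K) * x1 ^ 2 * x2 + 4 * x1 ^ 2 * x2 * d + 2 * x1 ^ 3 + (-2 : K) * x1 ^ 3 * d) * hy1 + ((-2 : K) * y2 ^ 2 + 2 * y2 ^ 2 * d + (-2 : K) * x2 + 6 * x2 * d + (-6 : K) * x2 * d ^ 2 + 2 * x2 * d ^ 3 + 4 * x2 ^ 2 + (-4 :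 K) * x2 ^ 2 * d ^ 2 + 2 * x2 ^ 3 + (-2 : K) * x2 ^ 3 * d + 4 * x1 + (-12 : K) * x1 * d + 12 * x1 * d ^ 2 + (-4 : K) * x1 * d ^ 3 + (-16 : K) * x1 * x2 + 16 * x1 * x2 * d ^ 2 + (-4 : K) * x1 * x2 ^ 2 + 4 * x1 * x2 ^ 2 * d + 16 * x1 ^ 2 + (-16 : K) * x1 ^ 2 * d ^ 2 + (-4 : K) * x1 ^ 2 * x2 + 4 * x1 ^ 2 * x2 * d + 8 * x1 ^ 3 + (-8 : K) * x1 ^ 3 * d) * hy2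
    · rw [div_mul_eq_mul_div, eq_div_iff hchar]
      refine mul_left_cancel₀ (pow_ne_zero 2 hx') ?_
      linear_combination ((-4 : K) * x2 ^ 2 * y2 + 2 * x2 ^ 2 * y2 * t ^ 2 + (-2 : K) * x2 ^ 2 * y2 * d * t ^ 2 + 4 * x2 ^ 2 * y2 * d ^ 2 + (-4 : K) * x2 ^ 3 * s + 2 * x2 ^ 3 * s * t ^ 2 + (-2 : K) * x2 ^ 3 * d * s * t ^ 2 + 4 * x2 ^ 3 * d ^ 2 * s + (-2 : K) * x2 ^ 3 * y2 + 2 * x2 ^ 3 * y2 * d + (-2 : K) * x2 ^ 4 * s + 2 * x2 ^ 4 * d * s + 4 * y1 * x2 ^ 2 + (-2 : K) * y1 * x2 ^ 2 * t ^ 2 + 2 * y1 * x2 ^ 2 * d * t ^ 2 + (-4 : K) * y1 * x2 ^ 2 * d ^ 2 + 2 * y1 * x2 ^ 3 + (-2 : K) * y1 * x2 ^ 3 * d + 8 * x1 * x2 * y2 + (-4 : K) * x1 * x2 * y2 * t ^ 2 + 4 * x1 * x2 * y2 * d * t ^ 2 + (-8 : K) * x1 * x2 * y2 * d ^ 2 +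 12 * x1 * x2 ^ 2 * s + (-6 : K) * x1 * x2 ^ 2 * s * t ^ 2 + 6 * x1 * x2 ^ 2 * d * s * t ^ 2 + (-12 : K) * x1 * x2 ^ 2 * d ^ 2 * s + 2 * x1 * x2 ^ 2 * y2 + (-2 : K) * x1 * x2 ^ 2 * y2 * d + 4 * x1 * x2 ^ 3 * s + (-4 : K) * x1 * x2 ^ 3 * d * s + (-8 : K) * x1 * y1 * x2 + 4 * x1 * y1 * x2 * t ^ 2 + (-4 : K) * x1 * y1 * x2 * d * t ^ 2 + 8 * x1 * y1 * x2 * d ^ 2 + (-2 : K) * x1 * y1 * x2 ^ 2 + 2 * x1 * y1 * x2 ^ 2 * d + (-4 : K) * x1 ^ 2 * y2 + 2 * x1 ^ 2 * y2 * t ^ 2 + (-2 : K) * x1 ^ 2 * y2 * d * t ^ 2 + 4 * x1 ^ 2 * y2 * d ^ 2 + (-12 : K) * x1 ^ 2 * x2 * s + 6 * x1 ^ 2 * x2 * s * t ^ 2 + (-6 : K) * x1 ^ 2 * x2 * d * s * t ^ 2 + 12 * x1 ^ 2 * x2 * d ^ 2 * s + 2 * x1 ^ 2 * x2 * y2 +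 (-2 : K) * x1 ^ 2 * x2 * y2 * d + 4 * x1 ^ 2 * y1 + (-2 : K) * x1 ^ 2 * y1 * t ^ 2 + 2 * x1 ^ 2 * y1 * d * t ^ 2 + (-4 : K) * x1 ^ 2 * y1 * d ^ 2 + (-2 : K) * x1 ^ 2 * y1 * x2 + 2 * x1 ^ 2 * y1 * x2 * d + 4 * x1 ^ 3 * s + (-2 : K) * x1 ^ 3 * s * t ^ 2 + 2 * x1 ^ 3 * d * s * t ^ 2 + (-4 : K) * x1 ^ 3 * d ^ 2 * s + (-2 : K) * x1 ^ 3 * y2 + 2 * x1 ^ 3 * y2 * d + (-4 : K) * x1 ^ 3 * x2 * s + 4 * x1 ^ 3 * x2 * d * s + 2 * x1 ^ 3 * y1 + (-2 : K) * x1 ^ 3 * y1 * d + 2 * x1 ^ 4 * s + (-2 : K) * x1 ^ 4 * d * s) * hs + ((-2 : K) * y2 ^ 3 + 2 * y2 ^ 3 * d + 2 * x2 * y2 ^ 2 * t + (-2 : K) * x2 * y2 ^ 2 * d * t + 4 * x2 ^ 2 * y2 + (-4 : K) * x2 ^ 2 * y2 * d ^ 2 + (-4 : K) * x2 ^ 3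 * t + 4 * x2 ^ 3 * d ^ 2 * t + 2 * x2 ^ 3 * y2 + (-2 : K) * x2 ^ 3 * y2 * d + (-2 : K) * x2 ^ 4 * t + 2 * x2 ^ 4 * d * t + 2 * y1 * y2 ^ 2 + (-2 : K) * y1 * y2 ^ 2 * d + (-4 : K) * y1 * x2 * y2 * t + 4 * y1 * x2 * y2 * d * t + 4 * y1 * x2 ^ 2 + (-4 : K) * y1 * x2 ^ 2 * d ^ 2 + 2 * y1 * x2 ^ 3 + (-2 : K) * y1 * x2 ^ 3 * d + 2 * y1 ^ 2 * y2 + (-2 : K) * y1 ^ 2 * y2 * d + 2 * y1 ^ 2 * x2 * t + (-2 : K) * y1 ^ 2 * x2 * d * t + (-2 : K) * y1 ^ 3 + 2 * y1 ^ 3 * d + (-2 : K) * x1 * y2 ^ 2 * t + 2 * x1 * y2 ^ 2 * d * t + (-8 : K) * x1 * x2 * y2 + 8 * x1 * x2 * y2 * d ^ 2 + 12 * x1 * x2 ^ 2 * t + (-12 : K) * x1 * x2 ^ 2 * d ^ 2 * t + (-2 : K) * x1 * x2 ^ 2 * y2 + 2 * x1 * x2 ^ 2 * y2 * d + 4 *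 x1 * x2 ^ 3 * t + (-4 : K) * x1 * x2 ^ 3 * d * t + 4 * x1 * y1 * y2 * t + (-4 : K) * x1 * y1 * y2 * d * t + (-8 : K) * x1 * y1 * x2 + 8 * x1 * y1 * x2 * d ^ 2 + (-2 : K) * x1 * y1 * x2 ^ 2 + 2 * x1 * y1 * x2 ^ 2 * d + (-2 : K) * x1 * y1 ^ 2 * t + 2 * x1 * y1 ^ 2 * d * t + 4 * x1 ^ 2 * y2 + (-4 : K) * x1 ^ 2 * y2 * d ^ 2 + (-12 : K) * x1 ^ 2 * x2 * t + 12 * x1 ^ 2 * x2 * d ^ 2 * t + (-2 : K) * x1 ^ 2 * x2 * y2 + 2 * x1 ^ 2 * x2 * y2 * d + 4 * x1 ^ 2 * y1 + (-4 : K) * x1 ^ 2 * y1 * d ^ 2 + (-2 : K) * x1 ^ 2 * y1 * x2 + 2 * x1 ^ 2 * y1 * x2 * d + 4 * x1 ^ 3 * t + (-4 : K) * x1 ^ 3 * d ^ 2 * t + 2 * x1 ^ 3 * y2 + (-2 : K) * x1 ^ 3 * y2 * d + (-4 : K) * x1 ^ 3 * x2 * t + 4 * x1 ^ 3 * x2 *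 d * t + 2 * x1 ^ 3 * y1 + (-2 : K) * x1 ^ 3 * y1 * d + 2 * x1 ^ 4 * t + (-2 : K) * x1 ^ 4 * d * t) * ht + (4 * y2 ^ 2 + (-4 : K) * y2 ^ 2 * d + 8 * x2 ^ 2 + (-8 : K) * x2 ^ 2 * d ^ 2 + 4 * x2 ^ 3 + (-4 : K) * x2 ^ 3 * d + (-2 : K) * y1 ^ 2 + 2 * y1 ^ 2 * d + (-2 : K) * x1 + 6 * x1 * d + (-6 : K) * x1 * d ^ 2 + 2 * x1 * d ^ 3 + (-16 : K) * x1 * x2 + 16 * x1 * x2 * d ^ 2 + (-4 : K) * x1 * x2 ^ 2 + 4 * x1 * x2 ^ 2 * d + 4 * x1 ^ 2 + (-4 : K) * x1 ^ 2 * d ^ 2 + (-4 : K) * x1 ^ 2 * x2 + 4 * x1 ^ 2 * x2 * d + 2 * x1 ^ 3 + (-2 : K) * x1 ^ 3 * d) * hy1 + ((-2 : K) * y2 ^ 2 + 2 * y2 ^ 2 * d + (-2 : K) * x2 + 6 * x2 * d + (-6 : K) * x2 * d ^ 2 + 2 * x2 * d ^ 3 + 4 * x2 ^ 2 + (-4 :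 K) * x2 ^ 2 * d ^ 2 + 2 * x2 ^ 3 + (-2 : K) * x2 ^ 3 * d + 4 * x1 + (-12 : K) * x1 * d + 12 * x1 * d ^ 2 + (-4 : K) * x1 * d ^ 3 + (-16 : K) * x1 * x2 + 16 * x1 * x2 * d ^ 2 + (-4 : K) * x1 * x2 ^ 2 + 4 * x1 * x2 ^ 2 * d + 16 * x1 ^ 2 + (-16 : K) * x1 ^ 2 * d ^ 2 + (-4 : K) * x1 ^ 2 * x2 + 4 * x1 ^ 2 * x2 * d + 8 * x1 ^ 3 + (-8 : K) * x1 ^ 3 * d) * hy2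
    · rw [div_mul_eq_mul_div, eq_div_iff hchar]
      refine mul_left_cancel₀ (pow_ne_zero 2 hx') ?_
      linear_combination ((-6 : K) * x2 ^ 2 * y2 + 2 * x2 ^ 2 * y2 * t ^ 2 + 4 * x2 ^ 2 * y2 * d + (-2 : K) * x2 ^ 2 * y2 * d * t ^ 2 + 2 * x2 ^ 2 * y2 * d ^ 2 + (-6 : K) * x2 ^ 3 * s + 2 * x2 ^ 3 * s * t ^ 2 + 4 * x2 ^ 3 * d * s + (-2 : K) * x2 ^ 3 * d * s * t ^ 2 + 2 * x2 ^ 3 * d ^ 2 * s + (-2 : K) * x2 ^ 3 * y2 + 2 * x2 ^ 3 * y2 * d + (-2 : K) * x2 ^ 4 * s + 2 * x2 ^ 4 * d * s + 6 * y1 * x2 ^ 2 + (-2 : K) * y1 * x2 ^ 2 * t ^ 2 + (-4 : K) * y1 * x2 ^ 2 * d + 2 * y1 * x2 ^ 2 * d * t ^ 2 + (-2 : K) * y1 * x2 ^ 2 * d ^ 2 + 2 * y1 * x2 ^ 3 + (-2 : K) * y1 * x2 ^ 3 * d + 12 * x1 * x2 * y2 + (-4 : K) * x1 * x2 * y2 *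 t ^ 2 + (-8 : K) * x1 * x2 * y2 * d + 4 * x1 * x2 * y2 * d * t ^ 2 + (-4 : K) * x1 * x2 * y2 * d ^ 2 + 18 * x1 * x2 ^ 2 * s + (-6 : K) * x1 * x2 ^ 2 * s * t ^ 2 + (-12 : K) * x1 * x2 ^ 2 * d * s + 6 * x1 * x2 ^ 2 * d * s * t ^ 2 + (-6 : K) * x1 * x2 ^ 2 * d ^ 2 * s + 2 * x1 * x2 ^ 2 * y2 + (-2 : K) * x1 * x2 ^ 2 * y2 * d + 4 * x1 * x2 ^ 3 * s + (-4 : K) * x1 * x2 ^ 3 * d * s + (-12 : K) * x1 * y1 * x2 + 4 * x1 * y1 * x2 * t ^ 2 + 8 * x1 * y1 * x2 * d + (-4 : K) * x1 * y1 * x2 * d * t ^ 2 + 4 * x1 * y1 * x2 * d ^ 2 + (-2 : K) * x1 * y1 * x2 ^ 2 + 2 * x1 * y1 * x2 ^ 2 * d + (-6 : K) * x1 ^ 2 * y2 + 2 * x1 ^ 2 * y2 * t ^ 2 + 4 * x1 ^ 2 * y2 * d + (-2 : K) * x1 ^ 2 * y2 * d * t ^ 2 + 2 * x1 ^ 2 *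 y2 * d ^ 2 + (-18 : K) * x1 ^ 2 * x2 * s + 6 * x1 ^ 2 * x2 * s * t ^ 2 + 12 * x1 ^ 2 * x2 * d * s + (-6 : K) * x1 ^ 2 * x2 * d * s * t ^ 2 + 6 * x1 ^ 2 * x2 * d ^ 2 * s + 2 * x1 ^ 2 * x2 * y2 + (-2 : K) * x1 ^ 2 * x2 * y2 * d + 6 * x1 ^ 2 * y1 + (-2 : K) * x1 ^ 2 * y1 * t ^ 2 + (-4 : K) * x1 ^ 2 * y1 * d + 2 * x1 ^ 2 * y1 * d * t ^ 2 + (-2 : K) * x1 ^ 2 * y1 * d ^ 2 + (-2 : K) * x1 ^ 2 * y1 * x2 + 2 * x1 ^ 2 * y1 * x2 * d + 6 * x1 ^ 3 * s + (-2 : K) * x1 ^ 3 * s * t ^ 2 + (-4 : K) * x1 ^ 3 * d * s + 2 * x1 ^ 3 * d * s * t ^ 2 + (-2 : K) * x1 ^ 3 * d ^ 2 * s + (-2 : K) * x1 ^ 3 * y2 + 2 * x1 ^ 3 * y2 * d + (-4 : K) * x1 ^ 3 * x2 * s + 4 * x1 ^ 3 * x2 * d * s + 2 * x1 ^ 3 *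 y1 + (-2 : K) * x1 ^ 3 * y1 * d + 2 * x1 ^ 4 * s + (-2 : K) * x1 ^ 4 * d * s) * hs + ((-2 : K) * y2 ^ 3 + 2 * y2 ^ 3 * d + 2 * x2 * y2 ^ 2 * t + (-2 : K) * x2 * y2 ^ 2 * d * t + 6 * x2 ^ 2 * y2 + (-4 : K) * x2 ^ 2 * y2 * d + (-2 : K) * x2 ^ 2 * y2 * d ^ 2 + (-6 : K) * x2 ^ 3 * t + 4 * x2 ^ 3 * d * t + 2 * x2 ^ 3 * d ^ 2 * t + 2 * x2 ^ 3 * y2 + (-2 : K) * x2 ^ 3 * y2 * d + (-2 : K) * x2 ^ 4 * t + 2 * x2 ^ 4 * d * t + 2 * y1 * y2 ^ 2 + (-2 : K) * y1 * y2 ^ 2 * d + (-4 : K) * y1 * x2 * y2 * t + 4 * y1 * x2 * y2 * d * t + 6 * y1 * x2 ^ 2 + (-4 : K) * y1 * x2 ^ 2 * d + (-2 : K) * y1 * x2 ^ 2 * d ^ 2 + 2 * y1 * x2 ^ 3 + (-2 : K) * y1 * x2 ^ 3 * d + 2 * y1 ^ 2 * y2 + (-2 : K) * y1 ^ 2 *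 y2 * d + 2 * y1 ^ 2 * x2 * t + (-2 : K) * y1 ^ 2 * x2 * d * t + (-2 : K) * y1 ^ 3 + 2 * y1 ^ 3 * d + (-2 : K) * x1 * y2 ^ 2 * t + 2 * x1 * y2 ^ 2 * d * t + (-12 : K) * x1 * x2 * y2 + 8 * x1 * x2 * y2 * d + 4 * x1 * x2 * y2 * d ^ 2 + 18 * x1 * x2 ^ 2 * t + (-12 : K) * x1 * x2 ^ 2 * d * t + (-6 : K) * x1 * x2 ^ 2 * d ^ 2 * t + (-2 : K) * x1 * x2 ^ 2 * y2 + 2 * x1 * x2 ^ 2 * y2 * d + 4 * x1 * x2 ^ 3 * t + (-4 : K) * x1 * x2 ^ 3 * d * t + 4 * x1 * y1 * y2 * t + (-4 : K) * x1 * y1 * y2 * d * t + (-12 : K) * x1 * y1 * x2 + 8 * x1 * y1 * x2 * d + 4 * x1 * y1 * x2 * d ^ 2 + (-2 : K) * x1 * y1 * x2 ^ 2 + 2 * x1 * y1 * x2 ^ 2 * d + (-2 : K) * x1 * y1 ^ 2 * t + 2 * x1 * y1 ^ 2 * d * t + 6 * x1 ^ 2 * y2 + (-4 : K) * x1 ^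 2 * y2 * d + (-2 : K) * x1 ^ 2 * y2 * d ^ 2 + (-18 : K) * x1 ^ 2 * x2 * t + 12 * x1 ^ 2 * x2 * d * t + 6 * x1 ^ 2 * x2 * d ^ 2 * t + (-2 : K) * x1 ^ 2 * x2 * y2 + 2 * x1 ^ 2 * x2 * y2 * d + 6 * x1 ^ 2 * y1 + (-4 : K) * x1 ^ 2 * y1 * d + (-2 : K) * x1 ^ 2 * y1 * d ^ 2 + (-2 : K) * x1 ^ 2 * y1 * x2 + 2 * x1 ^ 2 * y1 * x2 * d + 6 * x1 ^ 3 * t + (-4 : K) * x1 ^ 3 * d * t + (-2 : K) * x1 ^ 3 * d ^ 2 * t + 2 * x1 ^ 3 * y2 + (-2 : K) * x1 ^ 3 * y2 * d + (-4 : K) * x1 ^ 3 * x2 * t + 4 * x1 ^ 3 * x2 * d * t + 2 * x1 ^ 3 * y1 + (-2 : K) * x1 ^ 3 * y1 * d + 2 * x1 ^ 4 * t + (-2 : K) * x1 ^ 4 * d * t) * ht + (4 * y2 ^ 2 + (-4 : K) * y2 ^ 2 * d + 12 * x2 ^ 2 + (-8 : K) * x2 ^ 2 * d + (-4 : K) *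 x2 ^ 2 * d ^ 2 + 4 * x2 ^ 3 + (-4 : K) * x2 ^ 3 * d + (-2 : K) * y1 ^ 2 + 2 * y1 ^ 2 * d + (-2 : K) * x1 + 6 * x1 * d + (-6 : K) * x1 * d ^ 2 + 2 * x1 * d ^ 3 + (-24 : K) * x1 * x2 + 16 * x1 * x2 * d + 8 * x1 * x2 * d ^ 2 + (-4 : K) * x1 * x2 ^ 2 + 4 * x1 * x2 ^ 2 * d + 8 * x1 ^ 2 + (-8 : K) * x1 ^ 2 * d + (-4 : K) * x1 ^ 2 * x2 + 4 * x1 ^ 2 * x2 * d + 2 * x1 ^ 3 + (-2 : K) * x1 ^ 3 * d) * hy1 + ((-2 : K) * y2 ^ 2 + 2 * y2 ^ 2 * d + (-2 : K) * x2 + 6 * x2 * d + (-6 : K) * x2 * d ^ 2 + 2 * x2 * d ^ 3 + 8 * x2 ^ 2 + (-8 : K) * x2 ^ 2 * d + 2 * x2 ^ 3 + (-2 : K) * x2 ^ 3 * d + 4 * x1 + (-12 : K) * x1 * d + 12 * x1 * d ^ 2 + (-4 : K) * x1 * d ^ 3 + (-24 : K) * x1 * x2 + 16 * x1 * x2 *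 d + 8 * x1 * x2 * d ^ 2 + (-4 : K) * x1 * x2 ^ 2 + 4 * x1 * x2 ^ 2 * d + 20 * x1 ^ 2 + (-8 : K) * x1 ^ 2 * d + (-12 : K) * x1 ^ 2 * d ^ 2 + (-4 : K) * x1 ^ 2 * x2 + 4 * x1 ^ 2 * x2 * d + 8 * x1 ^ 3 + (-8 : K) * x1 ^ 3 * d) * hy2
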